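/- Let L = V ⊕ W be a color gLt-algebra admitting a μ-quasi-multiplicative basis {e_i}_{i∈I} of W ≠ 0, with V tight. Then L is minimal (its only nonzero color gLt-ideal admitting a basis inherited from that of L is L itself) if and only if all elements of I are connected (the connection relation on I has a single equivalence class). -/

import Mathlib

set_option maxHeartbeats 1000000

/-- A (color) generalized Lie-type algebra: an `(n+2)`-ary `G`-graded algebra with
bicharacter `epsilon` satisfying the (colored) generalized Lie-type identities with
structure constants `alpha` (allowed to depend on the degrees of the arguments). -/
structure ColorGLT (F : Type) [Field F] (G : Type) [AddCommGroup G] [DecidableEq G]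
    (L : Type) [AddCommGroup L] [Module F L] (n : ℕ) where
  bracket : MultilinearMap F (fun _ : Fin (n + 2) => L) L
  grading : G → Submodule F L
  isInternal : DirectSum.IsInternal grading
  bracket_graded : ∀ (g : Fin (n + 2) → G) (x : Fin (n + 2) → L),
    (∀ t, x t ∈ grading (g t)) → bracket x ∈ grading (∑ t, g t)
  epsilon : G → G → F
  epsilon_ne_zero : ∀ g h, epsilon g h ≠ 0
  epsilon_add_left : ∀ g h k, epsilon (g + h) k = epsilon g k * epsilon h k
  epsilon_add_right : ∀ g h k, epsilon k (g + h) = epsilon k g * epsilon k h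
  epsilon_skew : ∀ g h, epsilon g h * epsilon h g = 1
  alpha : Fin (n + 2) → Fin (n + 2) → Fin (n + 2) → Equiv.Perm (Fin (n + 2)) →
      Equiv.Perm (Fin (n + 1)) → (Fin (n + 2) → G) → (Fin (n + 1) → G) → F
  glt : ∀ (k : Fin (n + 2)) (gx : Fin (n + 2) → G) (gy : Fin (n + 1) → G)
      (x : Fin (n + 2) → L) (y : Fin (n + 1) → L),
      (∀ t, x t ∈ grading (gx t)) → (∀ t, y t ∈ grading (gy t)) →
      bracket (Fin.insertNth k (bracket x) y) =
        ∑ i : Fin (n + 2), ∑ j : Fin (n + 2), ∑ σ₁ : Equiv.Perm (Fin (n + 2)),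
          ∑ σ₂ : Equiv.Perm (Fin (n + 1)),
            alpha i j k σ₁ σ₂ gx gy •
              bracket (Function.update (fun t => x (σ₁ t)) i
                (bracket (Fin.insertNth j (x (σ₁ i)) (fun t => y (σ₂ t)))))

namespace ColorGLT

variable {F : Type} [Field F] {G : Type} [AddCommGroup G] [DecidableEq G]
    {L : Type} [AddCommGroup L] [Module F L] {n : ℕ}

/-- A color gLt-ideal: a graded subspace `S` with `⟨S, L, …, L⟩_σ ⊆ S` for all `σ ∈ Sₙ`. -/
def IsIdeal (A : ColorGLT F G L n) (S : Submodule F L) : Prop :=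
  (S = ⨆ g : G, S ⊓ A.grading g) ∧
  ∀ (σ : Equiv.Perm (Fin (n + 2))) (x : Fin (n + 2) → L),
    x 0 ∈ S → A.bracket (fun t => x (σ t)) ∈ S

/-- `L` is centerless: `Z(L) = {x : ⟨x, L, …, L⟩_σ = 0 ∀ σ} = 0`. -/
def Centerless (A : ColorGLT F G L n) : Prop :=
  ∀ x : L, (∀ (σ : Equiv.Perm (Fin (n + 2))) (y : Fin (n + 2) → L),
    y 0 = x → A.bracket (fun t => y (σ t)) = 0) → x = 0

end ColorGLT

/-- A quasi-multiplicative basis of a color gLt-algebra: `L = V ⊕ W`, with a homogeneous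
basis `{e i}` of `W ≠ 0` satisfying the three quasi-multiplicativity conditions. -/
structure QMBasis {F : Type} [Field F] {G : Type} [AddCommGroup G] [DecidableEq G]
    {L : Type} [AddCommGroup L] [Module F L] {n : ℕ}
    (A : ColorGLT F G L n) (I : Type) where
  V : Submodule F L
  W : Submodule F L
  compl : IsCompl V W
  W_ne_bot : W ≠ ⊥
  V_graded : V = ⨆ g : G, V ⊓ A.grading g
  W_graded : W = ⨆ g : G, W ⊓ A.grading g
  e : I → L
  deg : I → G
  e_homog : ∀ i, e i ∈ A.grading (deg i)
  e_indep : LinearIndependent F e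
  e_span : Submodule.span F (Set.range e) = W
  qm1 : ∀ c : Fin (n + 2) → I,
    (∃ j, A.bracket (fun t => e (c t)) ∈ Submodule.span F {e j}) ∨
      A.bracket (fun t => e (c t)) ∈ V
  qm2 : ∀ (σ : Equiv.Perm (Fin (n + 2))) (S : Finset (Fin (n + 2))),
    S.Nonempty → S ≠ Finset.univ → ∀ ind : Fin (n + 2) → I, ∃ j : I,
      ∀ x : Fin (n + 2) → L, (∀ t, t ∈ S → x t = e (ind t)) →
        (∀ t, t ∉ S → x t ∈ V) →
        A.bracket (fun t => x (σ t)) ∈ Submodule.span F {e j}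
  qm3 : (∃ j, ∀ x : Fin (n + 2) → L, (∀ t, x t ∈ V) →
          A.bracket x ∈ Submodule.span F {e j}) ∨
        (∀ x : Fin (n + 2) → L, (∀ t, x t ∈ V) → A.bracket x ∈ V)

namespace QMBasis

variable {F : Type} [Field F] {G : Type} [AddCommGroup G] [DecidableEq G]
    {L : Type} [AddCommGroup L] [Module F L] {n : ℕ} {I : Type}
    {A : ColorGLT F G L n}

/-- The set of elements represented by an index of `𝔉 = I ∪ {v}`: `e i` for `some i`,
the subspace `V` for `none` (= `v`). -/
def elemSet (B : QMBasis A I) : Option I → Set L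
  | none => (B.V : Set L)
  | some i => {B.e i}

/-- The target set of an index of `𝔉`: the line `𝔽 e j` for `some j`, `V` for `v`. -/
def targetSet (B : QMBasis A I) : Option I → Set L
  | none => (B.V : Set L)
  | some j => (Submodule.span F {B.e j} : Set L)

/-- `x ∈ a_σ(c)`: the `σ`-permuted product of the elements represented by `c` is nonzero
and lands in the target represented by `x`; the value `v` is only allowed for all-basis
or all-`V` tuples. -/
def aMem (B : QMBasis A I) (σ : Equiv.Perm (Fin (n + 2)))
    (c : Fin (n + 2) → Option I) (x : Option I) : Prop :=
  (∃ z : Fin (n + 2) → L, (∀ t, z t ∈ B.elemSet (c (σ t))) ∧ A.bracket z ≠ 0) ∧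
  (∀ z : Fin (n + 2) → L, (∀ t, z t ∈ B.elemSet (c (σ t))) → A.bracket z ∈ B.targetSet x) ∧
  (x = none → ((∀ t, (c t).isSome = true) ∨ (∀ t, c t = none)))

/-- An admissible `(n+1)`-tuple over `𝔉 ∪ 𝔉̄`: all entries barred (`true`) or all
unbarred (`false`). -/
abbrev Tup (I : Type) (n : ℕ) := Bool × (Fin (n + 1) → Option I)

/-- `x ∈ μ(j, X)` where `j ∈ 𝔉 ∪ 𝔉̄` (left = unbarred, right = barred) and `X` is an
admissible tuple; defined via `a_σ` and `b_σ` as in the paper. -/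
def muMem (B : QMBasis A I) :
    Option I ⊕ Option I → Tup I n → Option I → Prop
  | Sum.inl j, (false, c), x => ∃ σ : Equiv.Perm (Fin (n + 2)), B.aMem σ (Fin.cons j c) x
  | Sum.inl j, (true, c), x => ∃ σ : Equiv.Perm (Fin (n + 2)), B.aMem σ (Fin.cons x c) j
  | Sum.inr j, (false, c), x =>
      ∃ (k : Fin (n + 1)) (σ : Equiv.Perm (Fin (n + 2))),
        B.aMem σ (Fin.cons x (Fin.cons j (fun t => c (k.succAbove t)))) (c k)
  | Sum.inr _, (true, _), _ => False

/-- The map `φ : P(I ∪ Ī) × T → P(I ∪ Ī)`, `φ(J, X) = K ∪ K̄` with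
`K = (⋃_{j ∈ J} μ(j, X)) \ {v}` (left = `I`, right = `Ī`). -/
def phi (B : QMBasis A I) (J : Set (I ⊕ I)) (X : Tup I n) : Set (I ⊕ I) :=
  {p | ∃ i : I, (p = Sum.inl i ∨ p = Sum.inr i) ∧
    ∃ j ∈ J, B.muMem (Sum.map some some j) X (some i)}

/-- Iterated application of `φ` along a list of tuples. -/
def chain (B : QMBasis A I) : Set (I ⊕ I) → List (Tup I n) → Set (I ⊕ I)
  | s, [] => s
  | s, X :: r => chain B (B.phi s X) r

/-- The connection relation: `i` is connected to `j`. -/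
def Connected (B : QMBasis A I) (i j : I) : Prop :=
  i = j ∨ ∃ (Xs : List (Tup I n)) (st : I ⊕ I),
    Xs ≠ [] ∧ (st = Sum.inl i ∨ st = Sum.inr i) ∧
    (∀ m, m < Xs.length → (chain B {st} (List.take m Xs)).Nonempty) ∧
    Sum.inl j ∈ chain B {st} Xs

/-- The connection class `[i]` of `i`. -/
def cls (B : QMBasis A I) (i : I) : Set I := {j | B.Connected i j}

/-- `W_{[i]} = ⊕_{j ∈ [i]} 𝔽 e_j`. -/
def Wcls (B : QMBasis A I) (i : I) : Submodule F L :=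
  Submodule.span F (B.e '' B.cls i)

/-- `V_{[i]} = (Σ_{i₁,…,iₙ ∈ [i]} 𝔽⟨e_{i₁},…,e_{iₙ}⟩) ∩ V`. -/
def Vcls (B : QMBasis A I) (i : I) : Submodule F L :=
  Submodule.span F {z : L | ∃ c : Fin (n + 2) → I,
    (∀ t, c t ∈ B.cls i) ∧ z = A.bracket (fun t => B.e (c t))} ⊓ B.V

/-- `𝔍_{[i]} = V_{[i]} ⊕ W_{[i]}`. -/
def Jcls (B : QMBasis A I) (i : I) : Submodule F L := B.Vcls i ⊔ B.Wcls i

/-- `S` admits a quasi-multiplicative basis inherited from that of `L`: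
`S = V_S ⊕ W_S` with `V_S ⊆ V` and `W_S ≠ 0` spanned by a subset of the `e i`. -/
def HasInheritedBasis (B : QMBasis A I) (S : Submodule F L) : Prop :=
  ∃ (V' : Submodule F L) (J' : Set I), V' ≤ B.V ∧ J'.Nonempty ∧
    S = V' ⊔ Submodule.span F (B.e '' J')

/-- `V` is tight: `V = 0` or `V = Σ_{μ(i₁,…,iₙ) = {v}} 𝔽⟨e_{i₁},…,e_{iₙ}⟩`. -/
def Tight (B : QMBasis A I) : Prop :=
  B.V = ⊥ ∨
    B.V = Submodule.span F {z : L | ∃ c : Fin (n + 2) → I,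
      ({x : Option I | ∃ σ, B.aMem σ (fun t => some (c t)) x} = {none}) ∧
      z = A.bracket (fun t => B.e (c t))}

/-- The set of elements represented by `u_{k}`: `u_k = e_k + e_{k̄}` (`= e` of the
underlying index, since `e_{j̄} = 0`) if `k ∉ {v, v̄}`, and `u_k = V` otherwise. -/
def uSet (B : QMBasis A I) : Option I ⊕ Option I → Set L
  | Sum.inl none => (B.V : Set L)
  | Sum.inr none => (B.V : Set L)
  | Sum.inl (some i) => {B.e i}
  | Sum.inr (some i) => {B.e i}

/-- The full `(n+2)`-tuple `(k₁, …, kₙ)` over `𝔉 ∪ 𝔉̄` obtained from a first entry and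
an admissible tuple. -/
def fullTup {I : Type} {n : ℕ} (k₁ : Option I ⊕ Option I) (X : Tup I n) :
    Fin (n + 2) → Option I ⊕ Option I :=
  Fin.cons k₁ (fun t => if X.1 then Sum.inr (X.2 t) else Sum.inl (X.2 t))

/-- The basis is `μ`-quasi-multiplicative: whenever `i ∈ μ(k₁, …, kₙ)` then
`e i ∈ 𝔽⟨u_{k₁}, …, u_{kₙ}⟩_σ` for some `σ ∈ Sₙ`. -/
def MuQM (B : QMBasis A I) : Prop :=
  ∀ (k₁ : Option I ⊕ Option I) (X : Tup I n) (i : I),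
    B.muMem k₁ X (some i) →
    ∃ (σ : Equiv.Perm (Fin (n + 2))) (z : Fin (n + 2) → L),
      (∀ t, z t ∈ B.uSet (fullTup k₁ X (σ t))) ∧
      B.e i ∈ Submodule.span F {A.bracket z}

end QMBasis


namespace QMBasis

variable {F : Type} [Field F] {G : Type} [AddCommGroup G] [DecidableEq G]
    {L : Type} [AddCommGroup L] [Module F L] {n : ℕ} {I : Type}
    {A : ColorGLT F G L n}

lemma connected_refl (B : QMBasis A I) (i : I) : B.Connected i i := Or.inl rfl

lemma phi_mono (B : QMBasis A I) {s s' : Set (I ⊕ I)} (h : s ⊆ s') (X : Tup I n) :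
    B.phi s X ⊆ B.phi s' X := by
  rintro p ⟨i, hp, j, hj, hm⟩; exact ⟨i, hp, j, h hj, hm⟩

lemma chain_mono (B : QMBasis A I) {s s' : Set (I ⊕ I)} (h : s ⊆ s')
    (Xs : List (Tup I n)) : B.chain s Xs ⊆ B.chain s' Xs := by
  induction Xs generalizing s s' with
  | nil => exact h
  | cons X r ih => exact ih (B.phi_mono h X)

lemma chain_append (B : QMBasis A I) (s : Set (I ⊕ I)) (Xs Ys : List (Tup I n)) :
    B.chain s (Xs ++ Ys) = B.chain (B.chain s Xs) Ys := by
  induction Xs generalizing s with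
  | nil => rfl
  | cons X r ih => rw [List.cons_append]; exact ih (B.phi s X)

lemma chain_eq_phi (B : QMBasis A I) (s : Set (I ⊕ I)) (Xs : List (Tup I n))
    (h : Xs ≠ []) : ∃ (s' : Set (I ⊕ I)) (X : Tup I n), B.chain s Xs = B.phi s' X := by
  induction Xs generalizing s with
  | nil => exact absurd rfl h
  | cons X r ih =>
    rcases r with - | ⟨Y, r'⟩
    · exact ⟨s, X, rfl⟩
    · exact ih (B.phi s X) (by simp)

lemma mem_phi_symm (B : QMBasis A I) {s : Set (I ⊕ I)} {X : Tup I n} {i : I} :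
    Sum.inl i ∈ B.phi s X ↔ Sum.inr i ∈ B.phi s X := by
  constructor <;> rintro ⟨i', hp, j, hj, hm⟩
  · rcases hp with hp | hp
    · cases Sum.inl_injective hp; exact ⟨i, Or.inr rfl, j, hj, hm⟩
    · exact absurd hp (by simp)
  · rcases hp with hp | hp
    · exact absurd hp (by simp)
    · cases Sum.inr_injective hp; exact ⟨i, Or.inl rfl, j, hj, hm⟩

lemma connected_trans (B : QMBasis A I) {i j k : I}
    (hij : B.Connected i j) (hjk : B.Connected j k) : B.Connected i k := by
  rcases hij with rfl | ⟨Xs, st, hXs, hst, hne, hmem⟩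
  · exact hjk
  rcases hjk with rfl | ⟨Ys, st', hYs, hst', hne', hmem'⟩
  · exact Or.inr ⟨Xs, st, hXs, hst, hne, hmem⟩
  -- st' ∈ chain {st} Xs
  have hst'_mem : st' ∈ B.chain {st} Xs := by
    obtain ⟨s', X, hX⟩ := B.chain_eq_phi {st} Xs hXs
    rcases hst' with rfl | rfl
    · rwa [hX] at hmem ⊢
    · rw [hX] at hmem ⊢; exact B.mem_phi_symm.1 hmem
  have hsub : B.chain {st'} Ys ⊆ B.chain {st} (Xs ++ Ys) := by
    rw [B.chain_append]
    exact B.chain_mono (by simpa using hst'_mem) Ys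
  refine Or.inr ⟨Xs ++ Ys, st, by simp [hXs], hst, ?_, hsub hmem'⟩
  intro m hm
  rcases lt_or_ge m Xs.length with hlt | hle
  · rw [List.take_append_of_le_length hlt.le]
    exact hne m hlt
  · rw [List.take_append, List.take_of_length_le hle, B.chain_append]
    rcases Nat.eq_or_lt_of_le hle with rfl | hlt'
    · simp only [Nat.sub_self, List.take_zero]
      exact ⟨Sum.inl j, hmem⟩
    · obtain ⟨p, hp⟩ := hne' (m - Xs.length)
        (by simp at hm; omega)
      exact ⟨p, B.chain_mono (by simpa using hst'_mem) _ hp⟩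

lemma connected_of_muMem (B : QMBasis A I) {i j : I} (st : I ⊕ I)
    (hst : st = Sum.inl i ∨ st = Sum.inr i) (X : Tup I n)
    (h : B.muMem (Sum.map some some st) X (some j)) : B.Connected i j := by
  refine Or.inr ⟨[X], st, by simp, hst, ?_, ?_⟩
  · intro m hm
    simp only [List.length_singleton, Nat.lt_one_iff] at hm
    subst hm
    exact ⟨st, rfl⟩
  · exact ⟨j, Or.inl rfl, st, rfl, h⟩

lemma e_mem_of_phi (B : QMBasis A I) (hmu : B.MuQM) {S : Submodule F L}
    (hS : A.IsIdeal S) {s : Set (I ⊕ I)} (hs : ∀ p ∈ s, B.e (Sum.elim id id p) ∈ S)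
    (X : Tup I n) : ∀ p ∈ B.phi s X, B.e (Sum.elim id id p) ∈ S := by
  rintro p ⟨i, hp, j, hj, hm⟩
  obtain ⟨σ, z, hz, hei⟩ := hmu (Sum.map some some j) X i hm
  have hx0 : z (σ.symm 0) ∈ S := by
    have h0 := hz (σ.symm 0)
    rw [Equiv.apply_symm_apply] at h0
    have hj' := hs j hj
    cases j with
    | inl a =>
      simp only [fullTup, Fin.cons_zero, Sum.map_inl, uSet, Set.mem_singleton_iff] at h0
      rw [h0]; exact hj'
    | inr a =>
      simp only [fullTup, Fin.cons_zero, Sum.map_inr, uSet, Set.mem_singleton_iff] at h0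
      rw [h0]; exact hj'
  have hbr : A.bracket z ∈ S := by
    have h := hS.2 σ (fun t => z (σ.symm t)) hx0
    simpa using h
  have hle : Submodule.span F {A.bracket z} ≤ S := by
    rw [Submodule.span_singleton_le_iff_mem]; exact hbr
  have hei' : B.e i ∈ S := hle hei
  rcases hp with rfl | rfl <;> exact hei'

lemma e_mem_of_chain (B : QMBasis A I) (hmu : B.MuQM) {S : Submodule F L}
    (hS : A.IsIdeal S) (Xs : List (Tup I n)) :
    ∀ (s : Set (I ⊕ I)), (∀ p ∈ s, B.e (Sum.elim id id p) ∈ S) →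
    ∀ p ∈ B.chain s Xs, B.e (Sum.elim id id p) ∈ S := by
  induction Xs with
  | nil => exact fun s hs => hs
  | cons X r ih => exact fun s hs => ih _ (B.e_mem_of_phi hmu hS hs X)

/-- The converse direction: if all indices are connected, every nonzero ideal with an
inherited basis is all of `L`. -/
lemma eq_top_of_connected (B : QMBasis A I) (hmu : B.MuQM) (ht : B.Tight)
    (hconn : ∀ i j : I, B.Connected i j) {S : Submodule F L}
    (hSid : A.IsIdeal S) (hSinh : B.HasInheritedBasis S) : S = ⊤ := by
  obtain ⟨V', J', hV', ⟨i₀, hi₀⟩, rfl⟩ := hSinh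
  set S := V' ⊔ Submodule.span F (B.e '' J') with hSdef
  have he₀ : B.e i₀ ∈ S :=
    Submodule.mem_sup_right (Submodule.subset_span ⟨i₀, hi₀, rfl⟩)
  have heS : ∀ j : I, B.e j ∈ S := by
    intro j
    rcases hconn i₀ j with rfl | ⟨Xs, st, _, hst, _, hmem⟩
    · exact he₀
    · refine B.e_mem_of_chain hmu hSid Xs {st} ?_ (Sum.inl j) hmem
      rintro p rfl
      rcases hst with rfl | rfl <;> exact he₀
  have hW : B.W ≤ S := by
    rw [← B.e_span, Submodule.span_le]
    rintro x ⟨j, rfl⟩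
    exact heS j
  have hV : B.V ≤ S := by
    rcases ht with h | h
    · rw [h]; exact bot_le
    · rw [h, Submodule.span_le]
      rintro x ⟨c, -, rfl⟩
      have h1 := hSid.2 1 (fun t => B.e (c t)) (heS (c 0))
      simpa using h1
  rw [eq_top_iff, ← B.compl.sup_eq_top]
  exact sup_le hV hW

lemma e_injective (B : QMBasis A I) : Function.Injective B.e :=
  B.e_indep.injective

lemma e_not_mem_V (B : QMBasis A I) (j : I) : B.e j ∉ B.V := by
  intro h
  have hW : B.e j ∈ B.W := B.e_span ▸ Submodule.subset_span ⟨j, rfl⟩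
  have : B.e j ∈ B.V ⊓ B.W := ⟨h, hW⟩
  rw [B.compl.inf_eq_bot, Submodule.mem_bot] at this
  exact B.e_indep.ne_zero j this

/-- One-step connection: if a nonzero product of basis elements lies in `𝔽 e m`, then
the index of any factor is connected to `m`. -/
lemma step_unbar (B : QMBasis A I) (d : Fin (n + 2) → I) (t₀ : Fin (n + 2)) (m : I)
    (hne : A.bracket (fun t => B.e (d t)) ≠ 0)
    (htar : A.bracket (fun t => B.e (d t)) ∈ Submodule.span F {B.e m}) :
    B.Connected (d t₀) m := by
  set π : Equiv.Perm (Fin (n + 2)) := Equiv.swap 0 t₀ with hπ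
  set c' : Fin (n + 2) → Option I := fun t => some (d (π t)) with hc'
  refine B.connected_of_muMem (Sum.inl (d t₀)) (Or.inl rfl) (false, Fin.tail c') ?_
  show ∃ σ, B.aMem σ (Fin.cons (some (d t₀)) (Fin.tail c')) (some m)
  have hcons : Fin.cons (some (d t₀)) (Fin.tail c') = c' := by
    have h0 : c' 0 = some (d t₀) := by simp [hc', hπ, Equiv.swap_apply_left]
    rw [← h0]; exact Fin.cons_self_tail c'
  rw [hcons]
  have helem : ∀ t, B.elemSet (c' (π t)) = {B.e (d t)} := by
    intro t
    simp [elemSet, hc', Equiv.swap_apply_self, hπ]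
  refine ⟨π, ⟨fun t => B.e (d t), fun t => by rw [helem t]; rfl, hne⟩,
    fun z hz => ?_, fun h => by simp at h⟩
  have hzz : z = fun t => B.e (d t) := by
    funext t
    have := hz t
    rw [helem t] at this
    exact this
  rw [hzz]; exact htar

/-- One-step "barred" connection: if a nonzero product of basis elements lies in
`targetSet x`, any two of its factors are connected. -/
lemma step_bar (B : QMBasis A I) (d : Fin (n + 2) → I) {t₀ t' : Fin (n + 2)}
    (htt : t₀ ≠ t') (x : Option I)
    (hne : A.bracket (fun t => B.e (d t)) ≠ 0)
    (htar : A.bracket (fun t => B.e (d t)) ∈ B.targetSet x) :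
    B.Connected (d t₀) (d t') := by
  set π₁ : Equiv.Perm (Fin (n + 2)) := Equiv.swap 0 t' with hπ₁
  set π₂ : Equiv.Perm (Fin (n + 2)) := Equiv.swap 1 (π₁ t₀) with hπ₂
  set ρ : Equiv.Perm (Fin (n + 2)) := π₂.trans π₁ with hρ
  have hπ₁t₀ : π₁ t₀ ≠ 0 := by
    intro h
    have h2 : π₁ t' = 0 := Equiv.swap_apply_right 0 t'
    exact htt (π₁.injective (h.trans h2.symm))
  have hρ0 : ρ 0 = t' := by
    have h20 : π₂ 0 = 0 :=
      Equiv.swap_apply_of_ne_of_ne Fin.zero_ne_one (Ne.symm hπ₁t₀)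
    show π₁ (π₂ 0) = t'
    rw [h20]; exact Equiv.swap_apply_left 0 t'
  have hρ1 : ρ 1 = t₀ := by
    show π₁ (π₂ 1) = t₀
    rw [hπ₂, Equiv.swap_apply_left, hπ₁, Equiv.swap_apply_self]
  set D : Fin (n + 2) → Option I := fun t => some (d (ρ t)) with hD
  set rest : Fin n → Option I := fun s => D s.succ.succ with hrest
  set c : Fin (n + 1) → Option I := Fin.snoc rest x with hc
  refine B.connected_of_muMem (Sum.inr (d t₀)) (Or.inr rfl) (false, c) ?_
  show ∃ (k : Fin (n + 1)) (σ : Equiv.Perm (Fin (n + 2))),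
    B.aMem σ (Fin.cons (some (d t')) (Fin.cons (some (d t₀))
      (fun s => c (k.succAbove s)))) (c k)
  refine ⟨Fin.last n, ρ.symm, ?_⟩
  have hck : c (Fin.last n) = x := Fin.snoc_last _ _
  have hcs : (fun s => c ((Fin.last n).succAbove s)) = rest := by
    funext s
    rw [Fin.succAbove_last]
    exact Fin.snoc_castSucc _ _ _
  have htup : Fin.cons (some (d t')) (Fin.cons (some (d t₀))
      (fun s => c ((Fin.last n).succAbove s))) = D := by
    rw [hcs]
    funext t
    refine Fin.cases ?_ (fun s => ?_) t
    · rw [Fin.cons_zero]; simp [hD, hρ0]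
    · rw [Fin.cons_succ]
      refine Fin.cases ?_ (fun s' => ?_) s
      · rw [Fin.cons_zero]
        show some (d t₀) = D (Fin.succ 0)
        rw [Fin.succ_zero_eq_one]
        simp [hD, hρ1]
      · rw [Fin.cons_succ]
  rw [htup, hck]
  have helem : ∀ t, B.elemSet (D (ρ.symm t)) = {B.e (d t)} := by
    intro t
    simp [elemSet, hD, Equiv.apply_symm_apply]
  refine ⟨⟨fun t => B.e (d t), fun t => by rw [helem t]; rfl, hne⟩,
    fun z hz => ?_, fun _ => Or.inl (fun t => by simp [hD])⟩
  have hzz : z = fun t => B.e (d t) := by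
    funext t
    have := hz t
    rw [helem t] at this
    exact this
  rw [hzz]; exact htar

/-- One-step connection for mixed products (some basis elements, some elements of `V`). -/
lemma step_mixed (B : QMBasis A I) (d : Fin (n + 2) → I) (t₀ : Fin (n + 2))
    (s : Finset (Fin (n + 2))) (ht₀ : t₀ ∈ s) (j' : I) (w : Fin (n + 2) → L)
    (hwS : ∀ t ∈ s, w t = B.e (d t)) (hwV : ∀ t ∉ s, w t ∈ B.V)
    (hne : A.bracket w ≠ 0)
    (hall : ∀ z : Fin (n + 2) → L, (∀ t ∈ s, z t = B.e (d t)) → (∀ t ∉ s, z t ∈ B.V) →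
      A.bracket z ∈ Submodule.span F {B.e j'}) :
    B.Connected (d t₀) j' := by
  classical
  set π : Equiv.Perm (Fin (n + 2)) := Equiv.swap 0 t₀ with hπ
  set c' : Fin (n + 2) → Option I := fun t => if t ∈ s then some (d t) else none with hc'
  set c'' : Fin (n + 2) → Option I := fun t => c' (π t) with hc''
  refine B.connected_of_muMem (Sum.inl (d t₀)) (Or.inl rfl) (false, Fin.tail c'') ?_
  show ∃ σ, B.aMem σ (Fin.cons (some (d t₀)) (Fin.tail c'')) (some j')
  have hcons : Fin.cons (some (d t₀)) (Fin.tail c'') = c'' := by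
    have h0 : c'' 0 = some (d t₀) := by
      simp [hc'', hc', hπ, Equiv.swap_apply_left, ht₀]
    rw [← h0]; exact Fin.cons_self_tail c''
  rw [hcons]
  have helemS : ∀ t ∈ s, B.elemSet (c'' (π t)) = {B.e (d t)} := by
    intro t hts
    simp [hc'', hc', hπ, Equiv.swap_apply_self, hts, elemSet]
  have helemV : ∀ t ∉ s, B.elemSet (c'' (π t)) = (B.V : Set L) := by
    intro t hts
    simp [hc'', hc', hπ, Equiv.swap_apply_self, hts, elemSet]
  refine ⟨π, ⟨w, fun t => ?_, hne⟩, fun z hz => ?_, fun h => by simp at h⟩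
  · by_cases hts : t ∈ s
    · rw [helemS t hts, hwS t hts]; rfl
    · rw [helemV t hts]
      exact hwV t hts
  · refine hall z (fun t hts => ?_) (fun t hts => ?_)
    · have := hz t
      rw [helemS t hts] at this
      exact this
    · have := hz t
      rw [helemV t hts] at this
      exact this

/-- Multilinear expansion lemma: if the bracket of every tuple of "pure" entries lies in
`S`, then so does the bracket of any tuple of entries in the respective spans. -/
lemma bracket_mem_of_span (S : Submodule F L) (T : Fin (n + 2) → Set L)
    (hpure : ∀ w : Fin (n + 2) → L, (∀ t, w t ∈ T t) → A.bracket w ∈ S) :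
    ∀ z : Fin (n + 2) → L, (∀ t, z t ∈ Submodule.span F (T t)) → A.bracket z ∈ S := by
  suffices h : ∀ (s : Finset (Fin (n + 2))) (z : Fin (n + 2) → L),
      (∀ t ∈ s, z t ∈ Submodule.span F (T t)) → (∀ t ∉ s, z t ∈ T t) →
      A.bracket z ∈ S by
    intro z hz
    exact h Finset.univ z (fun t _ => hz t) (fun t ht => absurd (Finset.mem_univ t) ht)
  intro s
  induction s using Finset.induction_on with
  | empty => exact fun z _ h0 => hpure z (fun t => h0 t (Finset.notMem_empty t))
  | @insert a s ha ih =>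
    intro z hz h0
    have hza : z a ∈ Submodule.span F (T a) := hz a (Finset.mem_insert_self a s)
    have key : ∀ x ∈ Submodule.span F (T a), A.bracket (Function.update z a x) ∈ S := by
      intro x hx
      induction hx using Submodule.span_induction with
      | mem x hx =>
        refine ih (Function.update z a x) (fun t hts => ?_) (fun t hts => ?_)
        · rw [Function.update_of_ne (fun h => ha (by rw [← h]; exact hts)) x z]
          exact hz t (Finset.mem_insert_of_mem hts)
        · by_cases hta : t = a
          · subst hta
            rw [Function.update_self]
            exact hx
          · rw [Function.update_of_ne hta x z]
            exact h0 t (by simp [hta, hts])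
      | zero =>
        rw [A.bracket.map_coord_zero a (Function.update_self a 0 z)]
        exact zero_mem S
      | add x y hx hy ihx ihy =>
        rw [A.bracket.map_update_add]
        exact add_mem ihx ihy
      | smul c x hx ihx =>
        rw [A.bracket.map_update_smul]
        exact S.smul_mem c ihx
    have := key (z a) hza
    rwa [Function.update_eq_self] at this

/-- A product of basis elements, one of whose indices is connected to `i`, lies
in `𝔍_{[i]}`. -/
lemma bracket_e_mem_Jcls (B : QMBasis A I) (i : I) (d : Fin (n + 2) → I)
    (t₀ : Fin (n + 2)) (hd : B.Connected i (d t₀)) :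
    A.bracket (fun t => B.e (d t)) ∈ B.Jcls i := by
  by_cases hne : A.bracket (fun t => B.e (d t)) = 0
  · rw [hne]; exact zero_mem _
  rcases B.qm1 d with ⟨m, hm⟩ | hV
  · have hconn : B.Connected i m := B.connected_trans hd (B.step_unbar d t₀ m hne hm)
    have hem : B.e m ∈ B.Wcls i := Submodule.subset_span ⟨m, hconn, rfl⟩
    obtain ⟨a, ha⟩ := Submodule.mem_span_singleton.1 hm
    exact Submodule.mem_sup_right (ha ▸ Submodule.smul_mem _ a hem)
  · have hall : ∀ t, d t ∈ B.cls i := by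
      intro t
      by_cases h : t = t₀
      · rw [h]; exact hd
      · refine B.connected_trans hd (B.step_bar d (Ne.symm h) none hne ?_)
        exact hV
    exact Submodule.mem_sup_left ⟨Submodule.subset_span ⟨d, hall, rfl⟩, hV⟩

/-- Key lemma: any bracket with one entry equal to `e j` for `j` connected to `i`
lies in `𝔍_{[i]}`. -/
lemma bracket_mem_Jcls (B : QMBasis A I) (i : I) {j : I} (hj : B.Connected i j)
    (t₀ : Fin (n + 2)) (z : Fin (n + 2) → L) (hz : z t₀ = B.e j) :
    A.bracket z ∈ B.Jcls i := by
  classical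
  set T : Fin (n + 2) → Set L :=
    fun t => if t = t₀ then {B.e j} else ((B.V : Set L) ∪ Set.range B.e) with hT
  refine bracket_mem_of_span (B.Jcls i) T ?_ z ?_
  · intro w hw
    have hwt₀ : w t₀ = B.e j := by
      have := hw t₀
      simpa [hT] using this
    set s : Finset (Fin (n + 2)) := Finset.univ.filter (fun t => w t ∉ B.V) with hs
    have hmemS : ∀ t, t ∈ s ↔ w t ∉ B.V := by
      intro t; simp [hs]
    have hchoice : ∀ t, ∃ k, (t ∈ s → w t = B.e k) := by
      intro t
      by_cases hts : t ∈ s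
      · by_cases h : t = t₀
        · exact ⟨j, fun _ => by rw [h, hwt₀]⟩
        · have := hw t
          simp only [hT, if_neg h, Set.mem_union] at this
          rcases this with hVm | ⟨k, hk⟩
          · exact absurd hVm ((hmemS t).1 hts)
          · exact ⟨k, fun _ => hk.symm⟩
      · exact ⟨j, fun h => absurd h hts⟩
    choose d hdw using hchoice
    have ht₀s : t₀ ∈ s := (hmemS t₀).2 (by rw [hwt₀]; exact B.e_not_mem_V j)
    have hdt₀ : d t₀ = j := B.e_injective (by rw [← hdw t₀ ht₀s, hwt₀])
    have hconn : B.Connected i (d t₀) := by rw [hdt₀]; exact hj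
    by_cases hsu : s = Finset.univ
    · have hwe : w = fun t => B.e (d t) :=
        funext fun t => hdw t (hsu ▸ Finset.mem_univ t)
      rw [hwe]
      exact B.bracket_e_mem_Jcls i d t₀ hconn
    · by_cases hne : A.bracket w = 0
      · rw [hne]; exact zero_mem _
      obtain ⟨j', hj'⟩ := B.qm2 1 s ⟨t₀, ht₀s⟩ hsu d
      have hwV : ∀ t ∉ s, w t ∈ B.V := by
        intro t hts
        by_contra h
        exact hts ((hmemS t).2 h)
      have hall : ∀ z : Fin (n + 2) → L, (∀ t ∈ s, z t = B.e (d t)) →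
          (∀ t ∉ s, z t ∈ B.V) → A.bracket z ∈ Submodule.span F {B.e j'} := by
        intro z h1 h2
        have := hj' z h1 h2
        simpa using this
      have hwmem := hall w (fun t ht => hdw t ht) hwV
      have hconn' : B.Connected i j' :=
        B.connected_trans hconn (B.step_mixed d t₀ s ht₀s j' w (fun t ht => hdw t ht)
          hwV hne hall)
      obtain ⟨a, ha⟩ := Submodule.mem_span_singleton.1 hwmem
      exact Submodule.mem_sup_right
        (ha ▸ Submodule.smul_mem _ a (Submodule.subset_span ⟨j', hconn', rfl⟩))
  · intro t
    by_cases h : t = t₀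
    · subst h
      rw [hz]
      exact Submodule.subset_span (by simp [hT])
    · have htop : Submodule.span F ((B.V : Set L) ∪ Set.range B.e) = ⊤ := by
        rw [Submodule.span_union, Submodule.span_eq, B.e_span, B.compl.sup_eq_top]
      simp only [hT, if_neg h]
      rw [htop]
      exact Submodule.mem_top

/-- The glt case: any bracket with one entry equal to a bracket of basis elements with
all indices in `[i]` lies in `𝔍_{[i]}`. -/
lemma bracket_bracket_mem (B : QMBasis A I) (i : I) (d : Fin (n + 2) → I)
    (hd : ∀ t, d t ∈ B.cls i) (t₀ : Fin (n + 2)) (z : Fin (n + 2) → L)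
    (hz : z t₀ = A.bracket (fun t => B.e (d t))) : A.bracket z ∈ B.Jcls i := by
  classical
  set T : Fin (n + 2) → Set L :=
    fun t => if t = t₀ then {A.bracket (fun t => B.e (d t))}
      else (⋃ g, (A.grading g : Set L)) with hT
  refine bracket_mem_of_span (B.Jcls i) T ?_ z ?_
  · intro w hw
    have hwt₀ : w t₀ = A.bracket (fun t => B.e (d t)) := by simpa [hT] using hw t₀
    have hhom : ∀ s : Fin (n + 1), ∃ g, Fin.removeNth t₀ w s ∈ A.grading g := by
      intro s
      have hne : t₀.succAbove s ≠ t₀ := Fin.succAbove_ne t₀ s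
      have := hw (t₀.succAbove s)
      simp only [hT, if_neg hne, Set.mem_iUnion, SetLike.mem_coe] at this
      exact this
    choose gy hgy using hhom
    have hw_eq : w = Fin.insertNth t₀ (A.bracket (fun t => B.e (d t)))
        (Fin.removeNth t₀ w) := by
      rw [← hwt₀]
      exact (Fin.insertNth_self_removeNth t₀ w).symm
    rw [hw_eq, A.glt t₀ (fun t => B.deg (d t)) gy (fun t => B.e (d t))
      (Fin.removeNth t₀ w) (fun t => B.e_homog (d t)) hgy]
    refine Submodule.sum_mem _ (fun i' _ => Submodule.sum_mem _ (fun j' _ =>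
      Submodule.sum_mem _ (fun σ₁ _ => Submodule.sum_mem _ (fun σ₂ _ => ?_))))
    refine Submodule.smul_mem _ _ ?_
    set t₁ : Fin (n + 2) := if i' = 0 then 1 else 0 with ht₁
    have ht₁i : t₁ ≠ i' := by
      by_cases h : i' = 0
      · rw [ht₁, if_pos h, h]; exact Ne.symm Fin.zero_ne_one
      · rw [ht₁, if_neg h]; exact fun hh => h hh.symm
    refine B.bracket_mem_Jcls i (hd (σ₁ t₁)) t₁ _ ?_
    rw [Function.update_of_ne ht₁i]
  · intro t
    by_cases h : t = t₀
    · subst h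
      rw [hz]
      exact Submodule.subset_span (by simp [hT])
    · have htop : Submodule.span F (⋃ g, (A.grading g : Set L)) = ⊤ := by
        rw [Submodule.span_iUnion]
        simp only [Submodule.span_eq]
        exact A.isInternal.submodule_iSup_eq_top
      simp only [hT, if_neg h]
      rw [htop]
      exact Submodule.mem_top

lemma slotV (B : QMBasis A I) (i : I) (t₀ : Fin (n + 2)) (z : Fin (n + 2) → L) :
    ∀ v ∈ Submodule.span F {x : L | ∃ c : Fin (n + 2) → I,
      (∀ t, c t ∈ B.cls i) ∧ x = A.bracket (fun t => B.e (c t))},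
    A.bracket (Function.update z t₀ v) ∈ B.Jcls i := by
  intro v hv
  induction hv using Submodule.span_induction with
  | mem x hx =>
    obtain ⟨c, hc, rfl⟩ := hx
    exact B.bracket_bracket_mem i c hc t₀ _ (Function.update_self _ _ _)
  | zero =>
    rw [A.bracket.map_coord_zero t₀ (Function.update_self _ _ _)]
    exact zero_mem _
  | add x y hx hy ihx ihy =>
    rw [A.bracket.map_update_add]
    exact add_mem ihx ihy
  | smul a x hx ihx =>
    rw [A.bracket.map_update_smul]
    exact Submodule.smul_mem _ a ihx

lemma slotW (B : QMBasis A I) (i : I) (t₀ : Fin (n + 2)) (z : Fin (n + 2) → L) :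
    ∀ w ∈ B.Wcls i, A.bracket (Function.update z t₀ w) ∈ B.Jcls i := by
  intro w hw
  induction hw using Submodule.span_induction with
  | mem x hx =>
    obtain ⟨j, hj, rfl⟩ := hx
    exact B.bracket_mem_Jcls i hj t₀ _ (Function.update_self _ _ _)
  | zero =>
    rw [A.bracket.map_coord_zero t₀ (Function.update_self _ _ _)]
    exact zero_mem _
  | add x y hx hy ihx ihy =>
    rw [A.bracket.map_update_add]
    exact add_mem ihx ihy
  | smul a x hx ihx =>
    rw [A.bracket.map_update_smul]
    exact Submodule.smul_mem _ a ihx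

lemma mem_Jcls_slot (B : QMBasis A I) (i : I) (t₀ : Fin (n + 2))
    (z : Fin (n + 2) → L) (hz : z t₀ ∈ B.Jcls i) : A.bracket z ∈ B.Jcls i := by
  obtain ⟨v, hv, w, hw, hvw⟩ := Submodule.mem_sup.1 hz
  have heq : A.bracket z =
      A.bracket (Function.update z t₀ v) + A.bracket (Function.update z t₀ w) := by
    conv_lhs => rw [← Function.update_eq_self t₀ z, ← hvw]
    exact A.bracket.map_update_add z t₀ v w
  rw [heq]
  exact add_mem (B.slotV i t₀ z v hv.1) (B.slotW i t₀ z w hw)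

end QMBasis

section Graded

variable {F : Type} [Field F] {G : Type} [AddCommGroup G] [DecidableEq G]
    {L : Type} [AddCommGroup L] [Module F L] {n : ℕ}

/-- The projection onto the degree-`g` component. -/
noncomputable def ColorGLT.proj (A : ColorGLT F G L n) (g : G) : L →ₗ[F] L :=
  (A.grading g).subtype ∘ₗ (DirectSum.component F G (fun h => A.grading h) g) ∘ₗ
    (LinearEquiv.ofBijective (DirectSum.coeLinearMap A.grading) A.isInternal).symm.toLinearMap

lemma ColorGLT.proj_mem (A : ColorGLT F G L n) (g : G) (x : L) :
    A.proj g x ∈ A.grading g :=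
  ((LinearEquiv.ofBijective (DirectSum.coeLinearMap A.grading) A.isInternal).symm x g).2

lemma ColorGLT.proj_of_mem_same (A : ColorGLT F G L n) {g : G} {x : L}
    (hx : x ∈ A.grading g) : A.proj g x = x := by
  have := A.isInternal.ofBijective_coeLinearMap_of_mem hx
  show (((LinearEquiv.ofBijective (DirectSum.coeLinearMap A.grading) A.isInternal).symm x) g : L) = x
  rw [this]

lemma ColorGLT.proj_of_mem_ne (A : ColorGLT F G L n) {g h : G} (hgh : g ≠ h) {x : L}
    (hx : x ∈ A.grading g) : A.proj h x = 0 := by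
  have := A.isInternal.ofBijective_coeLinearMap_of_mem_ne hgh hx
  show (((LinearEquiv.ofBijective (DirectSum.coeLinearMap A.grading) A.isInternal).symm x) h : L) = 0
  rw [this]
  rfl

lemma ColorGLT.sum_proj (A : ColorGLT F G L n) (x : L) :
    ∃ s : Finset G, ∑ g ∈ s, A.proj g x = x := by
  classical
  set E := LinearEquiv.ofBijective (DirectSum.coeLinearMap A.grading) A.isInternal with hE
  refine ⟨(E.symm x).support, ?_⟩
  have hx : DirectSum.coeLinearMap A.grading (E.symm x) = x := E.apply_symm_apply x
  rw [DirectSum.coeLinearMap_eq_dfinsuppSum] at hx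
  exact hx

lemma ColorGLT.proj_mem_of_graded (A : ColorGLT F G L n) {S : Submodule F L}
    (hS : S ≤ ⨆ g, S ⊓ A.grading g) {x : L} (hx : x ∈ S) (g : G) : A.proj g x ∈ S := by
  have hx' : x ∈ ⨆ h, S ⊓ A.grading h := hS hx
  have hle : (⨆ h, S ⊓ A.grading h) ≤ ⨅ g', Submodule.comap (A.proj g') S := by
    refine iSup_le fun h => le_iInf fun g' y hy => ?_
    rcases eq_or_ne h g' with rfl | hne
    · simpa [Submodule.mem_comap, A.proj_of_mem_same hy.2] using hy.1
    · simp [Submodule.mem_comap, A.proj_of_mem_ne hne hy.2]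
  have := hle hx'
  rw [Submodule.mem_iInf] at this
  exact this g

lemma ColorGLT.span_homog_le (A : ColorGLT F G L n) {T : Set L}
    (hT : ∀ x ∈ T, ∃ g, x ∈ A.grading g) :
    Submodule.span F T ≤ ⨆ g, Submodule.span F T ⊓ A.grading g := by
  rw [Submodule.span_le]
  intro x hx
  obtain ⟨g, hg⟩ := hT x hx
  exact le_iSup (fun g => Submodule.span F T ⊓ A.grading g) g
    ⟨Submodule.subset_span hx, hg⟩

end Graded

namespace QMBasis

variable {F : Type} [Field F] {G : Type} [AddCommGroup G] [DecidableEq G]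
    {L : Type} [AddCommGroup L] [Module F L] {n : ℕ} {I : Type}
    {A : ColorGLT F G L n}

lemma Jcls_graded (B : QMBasis A I) (i : I) :
    B.Jcls i = ⨆ g, B.Jcls i ⊓ A.grading g := by
  apply le_antisymm
  · rw [Jcls]
    refine sup_le ?_ ?_
    · intro x hx
      set P := Submodule.span F {x : L | ∃ c : Fin (n + 2) → I,
        (∀ t, c t ∈ B.cls i) ∧ x = A.bracket (fun t => B.e (c t))} with hP
      have hPg : P ≤ ⨆ g, P ⊓ A.grading g := by
        refine A.span_homog_le ?_
        rintro y ⟨c, hc, rfl⟩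
        exact ⟨∑ t, B.deg (c t),
          A.bracket_graded (fun t => B.deg (c t)) _ (fun t => B.e_homog (c t))⟩
      have hVg : B.V ≤ ⨆ g, B.V ⊓ A.grading g := le_of_eq B.V_graded
      obtain ⟨s, hs⟩ := A.sum_proj x
      rw [← hs]
      refine Submodule.sum_mem _ fun g _ => ?_
      have h1 : A.proj g x ∈ P := A.proj_mem_of_graded hPg hx.1 g
      have h2 : A.proj g x ∈ B.V := A.proj_mem_of_graded hVg hx.2 g
      exact le_iSup (fun g => B.Jcls i ⊓ A.grading g) g
        ⟨Submodule.mem_sup_left ⟨h1, h2⟩, A.proj_mem g x⟩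
    · rw [Wcls, Submodule.span_le]
      rintro x ⟨j, hj, rfl⟩
      refine le_iSup (fun g => B.Jcls i ⊓ A.grading g) (B.deg j) ?_
      exact ⟨Submodule.mem_sup_right (Submodule.subset_span ⟨j, hj, rfl⟩), B.e_homog j⟩
  · exact iSup_le fun g => inf_le_left

lemma isIdeal_Jcls (B : QMBasis A I) (i : I) : A.IsIdeal (B.Jcls i) := by
  refine ⟨B.Jcls_graded i, fun σ x hx => ?_⟩
  refine B.mem_Jcls_slot i (σ.symm 0) (fun t => x (σ t)) ?_
  simpa [Equiv.apply_symm_apply] using hx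

end QMBasis

theorem stmt11 {F : Type} [Field F] {G : Type} [AddCommGroup G] [DecidableEq G]
    {L : Type} [AddCommGroup L] [Module F L] {n : ℕ} {I : Type}
    {A : ColorGLT F G L n} (B : QMBasis A I) (hmu : B.MuQM) (ht : B.Tight) :
    (∀ S : Submodule F L, S ≠ ⊥ → A.IsIdeal S → B.HasInheritedBasis S → S = ⊤) ↔
      ∀ i j : I, B.Connected i j := by
  constructor
  · intro hmin i j
    have hJne : B.Jcls i ≠ ⊥ := by
      intro h
      have hmem : B.e i ∈ B.Jcls i :=
        Submodule.mem_sup_right (Submodule.subset_span ⟨i, B.connected_refl i, rfl⟩)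
      rw [h, Submodule.mem_bot] at hmem
      exact B.e_indep.ne_zero i hmem
    have hinh : B.HasInheritedBasis (B.Jcls i) :=
      ⟨B.Vcls i, B.cls i, inf_le_right, ⟨i, B.connected_refl i⟩, rfl⟩
    have htop := hmin (B.Jcls i) hJne (B.isIdeal_Jcls i) hinh
    have hej : B.e j ∈ B.Jcls i := htop ▸ Submodule.mem_top
    obtain ⟨v, hv, w, hw, hvw⟩ := Submodule.mem_sup.1 hej
    have hwW : w ∈ B.W := by
      have hle : B.Wcls i ≤ B.W := by
        rw [QMBasis.Wcls, ← B.e_span]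
        exact Submodule.span_mono (Set.image_subset_range _ _)
      exact hle hw
    have hejW : B.e j ∈ B.W := B.e_span ▸ Submodule.subset_span ⟨j, rfl⟩
    have hv0 : v = 0 := by
      have hvW : v ∈ B.W := by
        have hveq : v = B.e j - w := by rw [← hvw]; abel
        rw [hveq]; exact sub_mem hejW hwW
      have hmem : v ∈ B.V ⊓ B.W := ⟨hv.2, hvW⟩
      rwa [B.compl.inf_eq_bot, Submodule.mem_bot] at hmem
    have hejW' : B.e j ∈ B.Wcls i := by rw [← hvw, hv0, zero_add]; exact hw
    by_contra hcon
    exact B.e_indep.notMem_span_image hcon hejW'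
  · intro hconn S _ hid hinh
    exact B.eq_top_of_connected hmu ht hconn hid hinh
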